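/- Let X be a complex manifold belonging to class E^{q,0} ∩ B^{1,q} (in the sense of the bigraded complex of forms). If γ₁ and γ₂ are two d-closed (0,q)-forms representing the same Dolbeault cohomology class in H^{0,q}(X), then γ₁ = γ₂. -/
import Mathlib


/-- Lemma 2.4 of the paper, in the abstract bigraded setting with conjugation.
Graded pieces: `A0qm1 = A^{0,q-1}`, `A0q = A^{0,q}`, `A0qp1 = A^{0,q+1}`,
`A1qm1 = A^{1,q-1}`, `A1q = A^{1,q}`, `A1qp1 = A^{1,q+1}`, `Aqm10 = A^{q-1,0}`,
`Aq0 = A^{q,0}`, `Aq1 = A^{q,1}`, `Aqm1 = A^{q,-1}` (vanishing).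
`X ∈ E^{q,0}`: `∂̄x = ∂g` solvable for `∂̄`-closed `∂g ∈ A^{q,0}`;
`X ∈ B^{1,q}`: `∂̄x = ∂g` has a `∂`-exact solution for `∂̄`-closed `∂g ∈ A^{1,q}`.
If `γ₁, γ₂ ∈ A^{0,q}` are `d`-closed and represent the same Dolbeault class
(`γ₂ = γ₁ + ∂̄β`), then `γ₁ = γ₂`. -/
theorem stmt9 {A0qm1 A0q A0qp1 A1qm1 A1q A1qp1 Aqm10 Aq0 Aq1 Aqm1 : Type*}
    [AddCommGroup A0qm1] [AddCommGroup A0q] [AddCommGroup A0qp1]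
    [AddCommGroup A1qm1] [AddCommGroup A1q] [AddCommGroup A1qp1]
    [AddCommGroup Aqm10] [AddCommGroup Aq0] [AddCommGroup Aq1] [AddCommGroup Aqm1]
    (db0qm1 : A0qm1 →+ A0q)        -- ∂̄ : A^{0,q-1} → A^{0,q}
    (db0q : A0q →+ A0qp1)          -- ∂̄ : A^{0,q} → A^{0,q+1}
    (d0qm1 : A0qm1 →+ A1qm1)       -- ∂ : A^{0,q-1} → A^{1,q-1}
    (d0q : A0q →+ A1q)             -- ∂ : A^{0,q} → A^{1,q}
    (db1qm1 : A1qm1 →+ A1q)        -- ∂̄ : A^{1,q-1} → A^{1,q}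
    (db1q : A1q →+ A1qp1)          -- ∂̄ : A^{1,q} → A^{1,q+1}
    (dqm10 : Aqm10 →+ Aq0)         -- ∂ : A^{q-1,0} → A^{q,0}
    (dbq0 : Aq0 →+ Aq1)            -- ∂̄ : A^{q,0} → A^{q,1}
    (dbqm1 : Aqm1 →+ Aq0)          -- ∂̄ : A^{q,-1} → A^{q,0}
    (conjB : A0qm1 →+ Aqm10) (conjB' : Aqm10 →+ A0qm1)  -- conjugation and its inverse
    (conjC : A0q →+ Aq0) (conjC' : Aq0 →+ A0q)
    (conjD : A1q →+ Aq1)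
    (hinv : ∀ β : A0qm1, conjB' (conjB β) = β)
    (hconj1 : ∀ β : A0qm1, conjC (db0qm1 β) = dqm10 (conjB β))
    (hconj2 : ∀ γ : A0q, conjD (d0q γ) = dbq0 (conjC γ))
    (hconj3 : ∀ x : Aqm10, conjC' (dqm10 x) = db0qm1 (conjB' x))
    (hvanish : Subsingleton Aqm1)  -- A^{q,-1} = 0
    (hE : ∀ g : Aqm10, dbq0 (dqm10 g) = 0 → ∃ x : Aqm1, dbqm1 x = dqm10 g)  -- E^{q,0}
    (hB : ∀ g : A0q, db1q (d0q g) = 0 →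
      ∃ y : A0qm1, db1qm1 (d0qm1 y) = d0q g)  -- B^{1,q}
    (γ₁ γ₂ : A0q)
    (hd₁ : d0q γ₁ = 0) (hdb₁ : db0q γ₁ = 0)   -- γ₁ is d-closed
    (hd₂ : d0q γ₂ = 0) (hdb₂ : db0q γ₂ = 0)   -- γ₂ is d-closed
    (β : A0qm1) (hclass : γ₂ = γ₁ + db0qm1 β)  -- same Dolbeault class
    : γ₁ = γ₂ := by
  have hdd : d0q (db0qm1 β) = 0 := by
    have : d0q γ₂ = d0q γ₁ + d0q (db0qm1 β) := by rw [hclass, map_add]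
    rw [hd₁, hd₂] at this
    simpa using this.symm
  have h1 : dbq0 (dqm10 (conjB β)) = 0 := by
    rw [← hconj1, ← hconj2, hdd, map_zero]
  obtain ⟨x, hx⟩ := hE (conjB β) h1
  have hx0 : x = 0 := Subsingleton.elim x 0
  rw [hx0, map_zero] at hx
  have h2 : db0qm1 β = 0 := by
    have := hconj3 (conjB β)
    rw [← hx, map_zero, hinv] at this
    exact this.symm
  rw [hclass, h2, add_zero]
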